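/- arXiv:1002.4925 — 2 statements merged into one kernel-verified Lean document; each statement's English description precedes it below -/
import Mathlib

section
/- Let f : ℝ → [0,∞) be a measurable, bounded function with ∫_ℝ (1 + v²) f(v) dv < ∞. Then (∫_ℝ f(v) dv)⁴ ≤ (2‖f‖_∞ + 1)³ ∫_ℝ∫_ℝ f(v) f(w) (v − w)² dv dw, where ‖f‖_∞ denotes the essential supremum of f. -/
open MeasureTheory

/-- If `f : ℝ → [0,∞)` is measurable and bounded with finite second moment, then
`(∫ f)⁴ ≤ (2‖f‖_∞ + 1)³ ∬ f(v) f(w) (v - w)² dv dw`, where `‖f‖_∞` is the essential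
supremum of `f`. -/
theorem integral_pow_four_le_of_interaction (f : ℝ → ℝ) (hf : Measurable f)
    (hf_nonneg : ∀ v, 0 ≤ f v) (hf_bdd : eLpNorm f ⊤ volume ≠ ⊤)
    (hf_mom : Integrable (fun v : ℝ => (1 + v ^ 2) * f v)) :
    (∫ v : ℝ, f v) ^ 4
      ≤ (2 * (eLpNorm f ⊤ volume).toReal + 1) ^ 3
          * ∫ w : ℝ, ∫ v : ℝ, f v * f w * (v - w) ^ 2 := by
  set C : ℝ := (eLpNorm f ⊤ volume).toReal with hC
  have hC0 : 0 ≤ C := ENNReal.toReal_nonneg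
  -- integrability
  have hI0 : Integrable f := by
    refine hf_mom.mono hf.aestronglyMeasurable (Filter.Eventually.of_forall fun v => ?_)
    rw [Real.norm_eq_abs, Real.norm_eq_abs, abs_of_nonneg (hf_nonneg v),
      abs_of_nonneg (mul_nonneg (by positivity) (hf_nonneg v))]
    nlinarith [hf_nonneg v, sq_nonneg v]
  have hI1 : Integrable (fun v : ℝ => v * f v) := by
    refine hf_mom.mono ((measurable_id.mul hf).aestronglyMeasurable)
      (Filter.Eventually.of_forall fun v => ?_)
    rw [Real.norm_eq_abs, Real.norm_eq_abs, abs_mul, abs_of_nonneg (hf_nonneg v),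
      abs_of_nonneg (mul_nonneg (by positivity : (0:ℝ) ≤ 1 + v ^ 2) (hf_nonneg v))]
    nlinarith [hf_nonneg v, sq_nonneg (|v| - 1), sq_abs v, abs_nonneg v]
  have hI2 : Integrable (fun v : ℝ => v ^ 2 * f v) := by
    refine hf_mom.mono ((measurable_id.pow_const 2).mul hf).aestronglyMeasurable
      (Filter.Eventually.of_forall fun v => ?_)
    rw [Real.norm_eq_abs, Real.norm_eq_abs, abs_mul, abs_of_nonneg (hf_nonneg v),
      abs_of_nonneg (mul_nonneg (by positivity : (0:ℝ) ≤ 1 + v ^ 2) (hf_nonneg v)),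
      abs_of_nonneg (sq_nonneg v)]
    nlinarith [hf_nonneg v]
  -- a helper for computing integrals of three-term sums
  have hadd3 : ∀ (g1 g2 g3 : ℝ → ℝ), Integrable g1 → Integrable g2 → Integrable g3 →
      (∫ v, (g1 v + g2 v + g3 v)) = (∫ v, g1 v) + (∫ v, g2 v) + (∫ v, g3 v) := by
    intro g1 g2 g3 h1 h2 h3
    rw [integral_add (f := fun v => g1 v + g2 v) (g := g3) (h1.add h2) h3,
      integral_add h1 h2]
  set S0 : ℝ := ∫ v : ℝ, f v with hS0
  set S1 : ℝ := ∫ v : ℝ, v * f v with hS1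
  set S2 : ℝ := ∫ v : ℝ, v ^ 2 * f v with hS2
  -- Fubini / algebraic identity for the double integral
  have hinner : ∀ w : ℝ, (∫ v : ℝ, f v * f w * (v - w) ^ 2)
      = f w * (S2 - 2 * w * S1 + w ^ 2 * S0) := by
    intro w
    have he : (fun v : ℝ => f v * f w * (v - w) ^ 2)
        = fun v : ℝ => f w * (v ^ 2 * f v + (-(2 * w)) * (v * f v) + w ^ 2 * f v) := by
      funext v; ring
    rw [he, integral_const_mul,
      hadd3 _ _ _ hI2 (hI1.const_mul _) (hI0.const_mul _),
      integral_const_mul, integral_const_mul]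
    simp only [← hS0, ← hS1, ← hS2]; ring
  have hdouble : (∫ w : ℝ, ∫ v : ℝ, f v * f w * (v - w) ^ 2)
      = 2 * (S0 * S2 - S1 ^ 2) := by
    have he : (fun w : ℝ => ∫ v : ℝ, f v * f w * (v - w) ^ 2)
        = fun w : ℝ => S2 * f w + (-(2 * S1)) * (w * f w) + S0 * (w ^ 2 * f w) := by
      funext w; rw [hinner w]; ring
    rw [he, hadd3 _ _ _ (hI0.const_mul _) (hI1.const_mul _) (hI2.const_mul _),
      integral_const_mul, integral_const_mul, integral_const_mul]
    simp only [← hS0, ← hS1, ← hS2]; ring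
  rw [hdouble]
  have hS0nonneg : 0 ≤ S0 := integral_nonneg hf_nonneg
  -- a.e. bound f ≤ C
  have hfC : ∀ᵐ v : ℝ, f v ≤ C := by
    filter_upwards [ae_le_eLpNormEssSup (f := f) (μ := volume)] with v hv
    have h1 : ((↑‖f v‖₊ : ENNReal)).toReal ≤ C :=
      ENNReal.toReal_mono hf_bdd (by rw [eLpNorm_exponent_top]; exact hv)
    rw [ENNReal.coe_toReal] at h1
    have h2 : f v = ‖f v‖ := (Real.norm_of_nonneg (hf_nonneg v)).symm
    rw [h2, ← coe_nnnorm]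
    exact h1
  rcases eq_or_lt_of_le hS0nonneg with hS0eq | hS0pos
  · -- S0 = 0 : f = 0 a.e., both sides vanish
    have hfz : f =ᵐ[volume] 0 :=
      (integral_eq_zero_iff_of_nonneg hf_nonneg hI0).mp hS0eq.symm
    have hS1z : S1 = 0 := by
      rw [hS1]
      refine integral_eq_zero_of_ae ?_
      filter_upwards [hfz] with v hv; simp [hv]
    have hS2z : S2 = 0 := by
      rw [hS2]
      refine integral_eq_zero_of_ae ?_
      filter_upwards [hfz] with v hv; simp [hv]
    rw [← hS0eq, hS1z, hS2z]
    norm_num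
  -- main case S0 > 0
  set m : ℝ := S1 / S0 with hm
  set R : ℝ := S0 / (2 * C + 1) with hR
  have hRpos : 0 < R := by positivity
  set A : ℝ := ∫ v : ℝ, (v - m) ^ 2 * f v with hA
  have heA : (fun v : ℝ => (v - m) ^ 2 * f v)
      = fun v : ℝ => v ^ 2 * f v + (-(2 * m)) * (v * f v) + m ^ 2 * f v := by
    funext v; ring
  have hIA : Integrable (fun v : ℝ => (v - m) ^ 2 * f v) := by
    rw [heA]; exact (hI2.add (hI1.const_mul _)).add (hI0.const_mul _)
  have hAval : A = S2 - 2 * m * S1 + m ^ 2 * S0 := by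
    rw [hA, heA, hadd3 _ _ _ hI2 (hI1.const_mul _) (hI0.const_mul _),
      integral_const_mul, integral_const_mul]
    simp only [← hS0, ← hS1, ← hS2]; ring
  have hAnonneg : 0 ≤ A :=
    integral_nonneg fun v => mul_nonneg (sq_nonneg _) (hf_nonneg v)
  -- split the integral of f
  set s : Set ℝ := Set.Icc (m - R) (m + R) with hs
  have hms : MeasurableSet s := measurableSet_Icc
  have hsplit : S0 = (∫ v in s, f v) + ∫ v in sᶜ, f v := (integral_add_compl hms hI0).symm
  have hvol : volume s < ⊤ := by
    rw [hs, Real.volume_Icc]; exact ENNReal.ofReal_lt_top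
  have hbound1 : (∫ v in s, f v) ≤ C * (2 * R) := by
    have h1 : ‖∫ v in s, f v‖ ≤ C * (volume s).toReal := by
      refine norm_setIntegral_le_of_norm_le_const_ae' hvol ?_
      filter_upwards [hfC] with v hv _
      rwa [Real.norm_eq_abs, abs_of_nonneg (hf_nonneg v)]
    have h2 : (volume s).toReal = 2 * R := by
      rw [hs, Real.volume_Icc, ENNReal.toReal_ofReal (by linarith)]
      ring
    calc (∫ v in s, f v) ≤ ‖∫ v in s, f v‖ := Real.le_norm_self _
      _ ≤ C * (volume s).toReal := h1
      _ = C * (2 * R) := by rw [h2]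
  have hbound2 : (∫ v in sᶜ, f v) ≤ A / R ^ 2 := by
    have h1 : (∫ v in sᶜ, f v) ≤ ∫ v in sᶜ, (v - m) ^ 2 / R ^ 2 * f v := by
      refine setIntegral_mono_on hI0.integrableOn
        (((hIA.div_const (R ^ 2)).congr (Filter.Eventually.of_forall fun v => by ring)).integrableOn)
        hms.compl fun v hv => ?_
      have hv' : R < |v - m| := by
        rw [hs] at hv
        simp only [Set.mem_compl_iff, Set.mem_Icc, not_and_or, not_le] at hv
        rcases hv with h | h
        · rw [abs_sub_comm, abs_of_pos (by linarith)]; linarith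
        · rw [abs_of_pos (by linarith)]; linarith
      have hsq : R ^ 2 ≤ (v - m) ^ 2 := by
        nlinarith [sq_abs (v - m), abs_nonneg (v - m)]
      have hfr := hf_nonneg v
      rw [div_mul_eq_mul_div, le_div_iff₀ (by positivity)]
      nlinarith
    have h2 : (∫ v in sᶜ, (v - m) ^ 2 / R ^ 2 * f v) ≤ ∫ v : ℝ, (v - m) ^ 2 / R ^ 2 * f v := by
      refine setIntegral_le_integral
        ((hIA.div_const (R ^ 2)).congr (Filter.Eventually.of_forall fun v => by ring))
        (Filter.Eventually.of_forall fun v => by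
          have := hf_nonneg v; positivity)
      
    have h3 : (∫ v : ℝ, (v - m) ^ 2 / R ^ 2 * f v) = A / R ^ 2 := by
      rw [hA, ← integral_div]
      congr 1; funext v; ring
    linarith
  -- hence S0 ≤ 2RC + A/R², giving A ≥ S0³/(2C+1)³
  have hkey : S0 ≤ C * (2 * R) + A / R ^ 2 := by linarith
  have hAR : R ^ 2 * (S0 - C * (2 * R)) ≤ A := by
    have h1 : S0 - C * (2 * R) ≤ A / R ^ 2 := by linarith
    calc R ^ 2 * (S0 - C * (2 * R)) ≤ R ^ 2 * (A / R ^ 2) :=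
          mul_le_mul_of_nonneg_left h1 (sq_nonneg R)
      _ = A := by field_simp
  have hAlow : S0 ^ 3 / (2 * C + 1) ^ 3 ≤ A := by
    have hSC : S0 - C * (2 * R) = S0 / (2 * C + 1) := by
      rw [hR]; field_simp; ring
    have heq : R ^ 2 * (S0 / (2 * C + 1)) = S0 ^ 3 / (2 * C + 1) ^ 3 := by
      rw [hR]; field_simp
    rw [← heq, ← hSC]; exact hAR
  -- final computation
  have hAS : S0 * A = S0 * S2 - S1 ^ 2 := by
    rw [hAval, hm]; field_simp; ring
  have h2C1 : (0:ℝ) < 2 * C + 1 := by linarith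
  calc S0 ^ 4 = S0 * S0 ^ 3 := by ring
    _ ≤ S0 * ((2 * C + 1) ^ 3 * A) := by
        refine mul_le_mul_of_nonneg_left ?_ hS0nonneg
        rw [div_le_iff₀ (by positivity)] at hAlow
        linarith [hAlow]
    _ ≤ (2 * C + 1) ^ 3 * (2 * (S0 * S2 - S1 ^ 2)) := by
        rw [← hAS]
        nlinarith [mul_nonneg hS0pos.le hAnonneg, pow_pos h2C1 3]
end

section
/- For every M > 0 there exists a constant C > 0, depending only on M, such that for every measurable function f : ℝ → [0, M] with ∫_ℝ √(1 + v²) f(v) dv < ∞ one has (∫_ℝ f(v) dv)⁷ ≤ C (∫_ℝ∫_ℝ f(v) f(w) (v − w)(v̂ − ŵ) dv dw) (∫_ℝ √(1 + v²) f(v) dv)³, where v̂ = v/√(1 + v²). -/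
open MeasureTheory

lemma sq_sqrt' (x : ℝ) : Real.sqrt (1 + x ^ 2) ^ 2 = 1 + x ^ 2 := by
  rw [Real.sq_sqrt]; positivity

lemma sqrt_pos' (x : ℝ) : 0 < Real.sqrt (1 + x ^ 2) :=
  Real.sqrt_pos.2 (by positivity)

lemma one_le_sqrt' (x : ℝ) : 1 ≤ Real.sqrt (1 + x ^ 2) := by
  nlinarith [sq_sqrt' x, Real.sqrt_nonneg (1 + x ^ 2), sq_nonneg x]

lemma abs_le_sqrt' (x : ℝ) : |x| ≤ Real.sqrt (1 + x ^ 2) := by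
  rw [show |x| = Real.sqrt (x^2) by rw [Real.sqrt_sq_eq_abs]]
  exact Real.sqrt_le_sqrt (by nlinarith)

lemma hat_hasDerivAt (x : ℝ) :
    HasDerivAt (fun v : ℝ => v / Real.sqrt (1 + v ^ 2))
      (1 / Real.sqrt (1 + x ^ 2) ^ 3) x := by
  have hs := sqrt_pos' x
  have hsq : HasDerivAt (fun v : ℝ => Real.sqrt (1 + v ^ 2))
      (x / Real.sqrt (1 + x ^ 2)) x := by
    have h1 : HasDerivAt (fun v : ℝ => 1 + v ^ 2) (2 * x) x := by
      simpa using ((hasDerivAt_pow 2 x).const_add 1)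
    have := h1.sqrt (by positivity)
    convert this using 1
    field_simp
  have := (hasDerivAt_id x).div hsq hs.ne'
  refine this.congr_deriv ?_
  have h2 := sq_sqrt' x
  simp only [id]
  field_simp
  nlinarith [hs]

lemma hat_key (v w : ℝ) :
    (v - w) ^ 2 / Real.sqrt (1 + v ^ 2 + w ^ 2) ^ 3
      ≤ (v - w) * (v / Real.sqrt (1 + v ^ 2) - w / Real.sqrt (1 + w ^ 2)) := by
  -- WLOG w < v
  have key : ∀ a b : ℝ, b < a →
      (a - b) ^ 2 / Real.sqrt (1 + a ^ 2 + b ^ 2) ^ 3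
        ≤ (a - b) * (a / Real.sqrt (1 + a ^ 2) - b / Real.sqrt (1 + b ^ 2)) := by
    intro a b hba
    obtain ⟨ξ, hξ, hslope⟩ := exists_hasDerivAt_eq_slope
      (fun v : ℝ => v / Real.sqrt (1 + v ^ 2)) (fun x => 1 / Real.sqrt (1 + x ^ 2) ^ 3)
      hba
      ((continuous_id.div (Real.continuous_sqrt.comp (by continuity))
        (fun x => (sqrt_pos' x).ne')).continuousOn)
      (fun x _ => hat_hasDerivAt x)
    have hξ2 : ξ ^ 2 ≤ a ^ 2 + b ^ 2 := by
      rcases le_or_gt 0 ξ with h | h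
      · nlinarith [hξ.1, hξ.2, sq_nonneg b]
      · nlinarith [hξ.1, hξ.2, sq_nonneg a]
    have h1 : Real.sqrt (1 + ξ ^ 2) ^ 3 ≤ Real.sqrt (1 + a ^ 2 + b ^ 2) ^ 3 := by
      exact pow_le_pow_left₀ (Real.sqrt_nonneg _) (Real.sqrt_le_sqrt (by linarith)) 3
    have hpos1 : 0 < Real.sqrt (1 + ξ ^ 2) ^ 3 := by positivity
    have hpos2 : 0 < Real.sqrt (1 + a ^ 2 + b ^ 2) ^ 3 := by
      have : (0:ℝ) < Real.sqrt (1 + a ^ 2 + b ^ 2) :=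
        Real.sqrt_pos.2 (by positivity)
      positivity
    have hd : a / Real.sqrt (1 + a ^ 2) - b / Real.sqrt (1 + b ^ 2)
        = (a - b) * (1 / Real.sqrt (1 + ξ ^ 2) ^ 3) := by
      rw [hslope]; field_simp [sub_ne_zero.mpr hba.ne']
    rw [hd]
    rw [div_le_iff₀ hpos2]
    have hab : (0:ℝ) < a - b := by linarith
    have : (a - b) * ((a - b) * (1 / Real.sqrt (1 + ξ ^ 2) ^ 3)) * Real.sqrt (1 + ξ ^ 2) ^ 3
        = (a - b) ^ 2 := by field_simp
    calc (a - b) ^ 2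
        = (a - b) * ((a - b) * (1 / Real.sqrt (1 + ξ ^ 2) ^ 3)) * Real.sqrt (1 + ξ ^ 2) ^ 3 :=
          this.symm
      _ ≤ (a - b) * ((a - b) * (1 / Real.sqrt (1 + ξ ^ 2) ^ 3)) * Real.sqrt (1 + a ^ 2 + b ^ 2) ^ 3 := by
          have : 0 ≤ (a - b) * ((a - b) * (1 / Real.sqrt (1 + ξ ^ 2) ^ 3)) := by positivity
          exact mul_le_mul_of_nonneg_left h1 this
  rcases lt_trichotomy w v with h | h | h
  · exact key v w h
  · subst h; simp
  · have := key w v h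
    have e1 : (w - v) ^ 2 = (v - w) ^ 2 := by ring
    have e2 : (1 + w ^ 2 + v ^ 2) = (1 + v ^ 2 + w ^ 2) := by ring
    rw [e1, e2] at this
    calc (v - w) ^ 2 / Real.sqrt (1 + v ^ 2 + w ^ 2) ^ 3
        ≤ (w - v) * (w / Real.sqrt (1 + w ^ 2) - v / Real.sqrt (1 + v ^ 2)) := this
      _ = (v - w) * (v / Real.sqrt (1 + v ^ 2) - w / Real.sqrt (1 + w ^ 2)) := by ring

lemma bathtub (M : ℝ) (hM : 0 < M) (g : ℝ → ℝ) (m : ℝ)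
    (h0 : ∀ v, 0 ≤ g v) (h1 : ∀ v, g v ≤ M)
    (hint : Integrable g) (hint2 : Integrable (fun v => g v * (v - m) ^ 2)) :
    (∫ v, g v) ^ 3 / (32 * M ^ 2) ≤ ∫ v, g v * (v - m) ^ 2 := by
  set A := ∫ v, g v with hA
  have hA0 : 0 ≤ A := integral_nonneg h0
  rcases eq_or_lt_of_le hA0 with h | h
  · rw [← h]
    simp only [ne_eq, OfNat.ofNat_ne_zero, not_false_eq_true, zero_pow, zero_div]
    exact integral_nonneg fun v => mul_nonneg (h0 v) (sq_nonneg _)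
  set r := A / (4 * M) with hr
  have hr0 : 0 < r := div_pos h (by positivity)
  set s := Set.Icc (m - r) (m + r) with hs
  have hms : MeasurableSet s := measurableSet_Icc
  have hvol : (volume s).toReal = 2 * r := by
    rw [hs, Real.volume_Icc]
    rw [ENNReal.toReal_ofReal (by linarith)]
    ring
  have hIcc : ∫ v in s, g v ≤ 2 * r * M := by
    calc ∫ v in s, g v ≤ ∫ _ in s, M := by
          apply setIntegral_mono_on hint.integrableOn (integrableOn_const ?_) hms
            (fun v _ => h1 v)
          rw [hs, Real.volume_Icc]; exact ENNReal.ofReal_lt_top.ne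
      _ = 2 * r * M := by rw [setIntegral_const, measureReal_def, hvol, smul_eq_mul]
  have htail : ∫ v in sᶜ, g v ≤ (∫ v, g v * (v - m) ^ 2) / r ^ 2 := by
    have step1 : ∫ v in sᶜ, g v ≤ ∫ v in sᶜ, g v * (v - m) ^ 2 / r ^ 2 := by
      apply setIntegral_mono_on hint.integrableOn
        ((hint2.div_const _).integrableOn) hms.compl
      intro v hv
      have hv' : r ≤ |v - m| := by
        rw [hs] at hv
        simp only [Set.mem_compl_iff, Set.mem_Icc, not_and_or, not_le] at hv
        rcases hv with h' | h'
        · rw [abs_sub_comm, abs_of_pos (by linarith)]; linarith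
        · rw [abs_of_pos (by linarith)]; linarith
      have : r ^ 2 ≤ (v - m) ^ 2 := by
        calc r ^ 2 ≤ |v - m| ^ 2 := pow_le_pow_left₀ hr0.le hv' 2
          _ = (v - m) ^ 2 := sq_abs _
      rw [le_div_iff₀ (pow_pos hr0 2)]
      exact mul_le_mul_of_nonneg_left this (h0 v)
    calc ∫ v in sᶜ, g v ≤ ∫ v in sᶜ, g v * (v - m) ^ 2 / r ^ 2 := step1
      _ ≤ ∫ v, g v * (v - m) ^ 2 / r ^ 2 := by
          apply setIntegral_le_integral (hint2.div_const _)
          filter_upwards with v using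
            div_nonneg (mul_nonneg (h0 v) (sq_nonneg _)) (sq_nonneg _)
      _ = (∫ v, g v * (v - m) ^ 2) / r ^ 2 := integral_div _ _
  have hsplit : A = (∫ v in s, g v) + ∫ v in sᶜ, g v := by
    rw [hA, ← integral_add_compl hms hint]
  have hAr : A - 2 * r * M ≤ (∫ v, g v * (v - m) ^ 2) / r ^ 2 := by
    linarith
  have h2rm : 2 * r * M = A / 2 := by rw [hr]; field_simp; ring
  rw [h2rm] at hAr
  have hfin : A / 2 * r ^ 2 ≤ ∫ v, g v * (v - m) ^ 2 := by
    have h2 : A / 2 ≤ (∫ v, g v * (v - m) ^ 2) / r ^ 2 := by linarith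
    calc A / 2 * r ^ 2 ≤ (∫ v, g v * (v - m) ^ 2) / r ^ 2 * r ^ 2 :=
          mul_le_mul_of_nonneg_right h2 (pow_pos hr0 2).le
      _ = ∫ v, g v * (v - m) ^ 2 := by field_simp
  have heq : A ^ 3 / (32 * M ^ 2) = A / 2 * r ^ 2 := by
    rw [hr]; field_simp; ring
  rw [heq]; exact hfin

set_option maxHeartbeats 2000000 in
/-- For every `M > 0` there is a constant `C > 0` depending only on `M` such that every
measurable `f : ℝ → [0, M]` with finite relativistic energy satisfies
`(∫ f)⁷ ≤ C (∬ f(v) f(w) (v - w)(v̂ - ŵ) dv dw) (∫ √(1 + v²) f(v) dv)³`,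
where `v̂ = v / √(1 + v²)`. -/
theorem integral_pow_seven_le_of_relativistic_interaction (M : ℝ) (hM : 0 < M) :
    ∃ C : ℝ, 0 < C ∧
      ∀ f : ℝ → ℝ, Measurable f → (∀ v, 0 ≤ f v) → (∀ v, f v ≤ M) →
        Integrable (fun v : ℝ => Real.sqrt (1 + v ^ 2) * f v) →
        (∫ v : ℝ, f v) ^ 7
          ≤ C * (∫ w : ℝ, ∫ v : ℝ, f v * f w
                  * ((v - w) * (v / Real.sqrt (1 + v ^ 2) - w / Real.sqrt (1 + w ^ 2))))
              * (∫ v : ℝ, Real.sqrt (1 + v ^ 2) * f v) ^ 3 := by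
  refine ⟨16384 * M ^ 2, by positivity, ?_⟩
  intro f hf h0 h1 hE
  set c : ℝ → ℝ := fun v => Real.sqrt (1 + v ^ 2) with hc
  have hc1 : ∀ v, 1 ≤ c v := fun v => one_le_sqrt' v
  have hc0 : ∀ v, 0 < c v := fun v => sqrt_pos' v
  have hcabs : ∀ v, |v| ≤ c v := fun v => abs_le_sqrt' v
  have hcmeas : Measurable c := Real.continuous_sqrt.measurable.comp (by measurability)
  -- f is integrable
  have hfint : Integrable f := by
    refine hE.mono hf.aestronglyMeasurable (ae_of_all _ fun v => ?_)
    rw [Real.norm_eq_abs, Real.norm_eq_abs, abs_of_nonneg (h0 v),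
      abs_of_nonneg (mul_nonneg (hc0 v).le (h0 v))]
    exact le_mul_of_one_le_left (h0 v) (hc1 v)
  set I := ∫ v, f v with hI
  set E := ∫ v, c v * f v with hEdef
  have hI0 : 0 ≤ I := integral_nonneg h0
  have hE0 : 0 ≤ E := integral_nonneg fun v => mul_nonneg (hc0 v).le (h0 v)
  have hIE : I ≤ E :=
    integral_mono hfint hE fun v => le_mul_of_one_le_left (h0 v) (hc1 v)
  -- the interaction kernel
  set F : ℝ × ℝ → ℝ := fun p => f p.1 * f p.2
      * ((p.1 - p.2) * (p.1 / c p.1 - p.2 / c p.2)) with hFdef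
  have hF0 : ∀ p, 0 ≤ F p := by
    intro p
    apply mul_nonneg (mul_nonneg (h0 _) (h0 _))
    refine le_trans ?_ (hat_key p.1 p.2)
    have : (0:ℝ) < Real.sqrt (1 + p.1 ^ 2 + p.2 ^ 2) :=
      Real.sqrt_pos.2 (by positivity)
    positivity
  have hFmeas : Measurable F := by
    apply Measurable.mul
    · exact (hf.comp measurable_fst).mul (hf.comp measurable_snd)
    · exact (measurable_fst.sub measurable_snd).mul
        ((measurable_fst.div (hcmeas.comp measurable_fst)).sub
          (measurable_snd.div (hcmeas.comp measurable_snd)))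
  have hFint : Integrable F (volume.prod volume) := by
    refine Integrable.mono ((hE.mul_prod hE).const_mul 4)
      hFmeas.aestronglyMeasurable (ae_of_all _ fun p => ?_)
    obtain ⟨v, w⟩ := p
    have hv1 : |v / c v| ≤ 1 := by
      rw [abs_div, abs_of_pos (hc0 v), div_le_one (hc0 v)]
      exact hcabs v
    have hw1 : |w / c w| ≤ 1 := by
      rw [abs_div, abs_of_pos (hc0 w), div_le_one (hc0 w)]
      exact hcabs w
    have hbr : |(v - w) * (v / c v - w / c w)| ≤ 2 * (c v + c w) := by
      rw [abs_mul]
      have h1 : |v - w| ≤ c v + c w := by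
        calc |v - w| ≤ |v| + |w| := abs_sub _ _
          _ ≤ c v + c w := add_le_add (hcabs v) (hcabs w)
      have h2 : |v / c v - w / c w| ≤ 2 := by
        calc |v / c v - w / c w| ≤ |v / c v| + |w / c w| := abs_sub _ _
          _ ≤ 2 := by linarith
      calc |v - w| * |v / c v - w / c w| ≤ (c v + c w) * 2 :=
            mul_le_mul h1 h2 (abs_nonneg _) (by positivity)
        _ = 2 * (c v + c w) := by ring
    have hprod : 2 * (c v + c w) ≤ 4 * (c v * c w) := by
      nlinarith [hc1 v, hc1 w]
    rw [Real.norm_eq_abs, Real.norm_eq_abs]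
    have hff : 0 ≤ f v * f w := mul_nonneg (h0 v) (h0 w)
    have hRHS : 0 ≤ 4 * (c v * f v * (c w * f w)) := by
      have := hc0 v; have := hc0 w; have := h0 v; have := h0 w; positivity
    rw [abs_of_nonneg hRHS]
    calc |f v * f w * ((v - w) * (v / c v - w / c w))|
        = f v * f w * |(v - w) * (v / c v - w / c w)| := by
          rw [abs_mul, abs_of_nonneg hff]
      _ ≤ f v * f w * (2 * (c v + c w)) :=
          mul_le_mul_of_nonneg_left hbr hff
      _ ≤ f v * f w * (4 * (c v * c w)) :=
          mul_le_mul_of_nonneg_left hprod hff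
      _ = 4 * (c v * f v * (c w * f w)) := by ring
  have hFswap : ∀ p : ℝ × ℝ, F (p.2, p.1) = F p := by
    intro p; simp only [hFdef]; ring
  set D := ∫ w, ∫ v, f v * f w
      * ((v - w) * (v / Real.sqrt (1 + v ^ 2) - w / Real.sqrt (1 + w ^ 2))) with hDdef
  have hD_eq : D = ∫ p, F p ∂(volume.prod volume) := by
    calc D = ∫ w, ∫ v, F (v, w) := rfl
      _ = ∫ p : ℝ × ℝ, F (p.2, p.1) ∂(volume.prod volume) :=
          integral_integral hFint.swap
      _ = ∫ p, F p ∂(volume.prod volume) := by simp_rw [hFswap]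
  have hD0 : 0 ≤ D := by
    rw [hD_eq]; exact integral_nonneg hF0
  -- trivial case
  rcases eq_or_lt_of_le hI0 with hI' | hIpos
  · rw [← hI']
    simp only [ne_eq, OfNat.ofNat_ne_zero, not_false_eq_true, zero_pow]
    have : (0:ℝ) ≤ 16384 * M ^ 2 * D := by positivity
    exact mul_nonneg this (by positivity)
  have hEpos : 0 < E := lt_of_lt_of_le hIpos hIE
  -- the cutoff
  set R := 2 * E / I with hR
  have hR2 : 2 ≤ R := by
    rw [hR, le_div_iff₀ hIpos]; linarith
  have hRpos : 0 < R := by linarith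
  set J := Set.Icc (-R) R with hJ
  have hJm : MeasurableSet J := measurableSet_Icc
  set g : ℝ → ℝ := J.indicator f with hg
  have hg0 : ∀ v, 0 ≤ g v := fun v => Set.indicator_nonneg (fun x _ => h0 x) v
  have hgM : ∀ v, g v ≤ M := by
    intro v; rw [hg]
    by_cases hv : v ∈ J
    · rw [Set.indicator_of_mem hv]; exact h1 v
    · rw [Set.indicator_of_notMem hv]; exact hM.le
  have hgf : ∀ v, g v ≤ f v := by
    intro v; rw [hg]
    by_cases hv : v ∈ J
    · rw [Set.indicator_of_mem hv]
    · rw [Set.indicator_of_notMem hv]; exact h0 v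
  have hgmeas : Measurable g := hf.indicator hJm
  have hgint : Integrable g := hfint.indicator hJm
  have hgbd : ∀ v, v ∈ J → |v| ≤ R := by
    intro v hv; rw [hJ] at hv; rw [abs_le]; exact ⟨hv.1, hv.2⟩
  have hgsupp : ∀ v, v ∉ J → g v = 0 := fun v hv => Set.indicator_of_notMem hv f
  -- moments of g
  set A := ∫ v, g v with hA
  set B := ∫ v, g v * v with hB
  set Q := ∫ v, g v * v ^ 2 with hQ
  have haux : ∀ (φ : ℝ → ℝ) (Cφ : ℝ), Measurable φ → (∀ v ∈ J, |φ v| ≤ Cφ) →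
      Integrable (fun v => g v * φ v) := by
    intro φ Cφ hφ hbd
    have hC0 : 0 ≤ Cφ :=
      le_trans (abs_nonneg _) (hbd 0 ⟨by linarith, by linarith⟩)
    refine Integrable.mono (hgint.const_mul Cφ) ((hgmeas.mul hφ).aestronglyMeasurable)
      (ae_of_all _ fun v => ?_)
    rw [Real.norm_eq_abs, Real.norm_eq_abs, abs_mul]
    by_cases hv : v ∈ J
    · rw [abs_of_nonneg (hg0 v), abs_of_nonneg (mul_nonneg hC0 (hg0 v))]
      calc g v * |φ v| ≤ g v * Cφ := mul_le_mul_of_nonneg_left (hbd v hv) (hg0 v)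
        _ = Cφ * g v := by ring
    · rw [hgsupp v hv]; simp
  have hBint : Integrable (fun v => g v * v) :=
    haux id R measurable_id fun v hv => hgbd v hv
  have hQint : Integrable (fun v => g v * v ^ 2) := by
    refine haux (fun v => v ^ 2) (R ^ 2) (measurable_id.pow_const 2) fun v hv => ?_
    rw [abs_pow]
    exact pow_le_pow_left₀ (abs_nonneg v) (hgbd v hv) 2
  -- lower bound for the mass of g
  have hAJ : A = ∫ v in J, f v := by rw [hA, hg, integral_indicator hJm]
  have hAI : I / 2 ≤ A := by
    have hsplit : I = (∫ v in J, f v) + ∫ v in Jᶜ, f v :=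
      (integral_add_compl hJm hfint).symm
    have htail : ∫ v in Jᶜ, f v ≤ E / R := by
      have step1 : ∫ v in Jᶜ, f v ≤ ∫ v in Jᶜ, c v * f v / R := by
        refine setIntegral_mono_on hfint.integrableOn
          ((hE.div_const R).integrableOn) hJm.compl fun v hv => ?_
        have hRv : R ≤ c v := by
          refine le_trans ?_ (hcabs v)
          rw [hJ] at hv
          simp only [Set.mem_compl_iff, Set.mem_Icc, not_and_or, not_le] at hv
          rcases hv with h' | h'
          · rw [abs_of_neg (by linarith)]; linarith
          · rw [abs_of_pos (by linarith)]; linarith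
        rw [le_div_iff₀ hRpos]
        calc f v * R ≤ f v * c v := mul_le_mul_of_nonneg_left hRv (h0 v)
          _ = c v * f v := by ring
      have step2 : ∫ v in Jᶜ, c v * f v / R ≤ ∫ v, c v * f v / R := by
        refine setIntegral_le_integral (hE.div_const R) (ae_of_all _ fun v => ?_)
        have := hc0 v; have := h0 v; positivity
      have step3 : ∫ v, c v * f v / R = E / R := integral_div _ _
      linarith
    have hER : E / R = I / 2 := by
      rw [hR]; field_simp
    rw [hAJ]
    linarith
  have hApos : 0 < A := lt_of_lt_of_le (by linarith) hAI
  -- variance lower bound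
  set m := B / A with hm
  have hm2int : Integrable (fun v => g v * (v - m) ^ 2) := by
    refine haux (fun v => (v - m) ^ 2) ((R + |m|) ^ 2)
      ((measurable_id.sub_const m).pow_const 2) fun v hv => ?_
    rw [abs_pow]
    refine pow_le_pow_left₀ (abs_nonneg _) ?_ 2
    calc |v - m| ≤ |v| + |m| := abs_sub _ _
      _ ≤ R + |m| := by linarith [hgbd v hv]
  have hvar : A ^ 4 / (32 * M ^ 2) ≤ A * Q - B ^ 2 := by
    have hbt := bathtub M hM g m hg0 hgM hgint hm2int
    have hexp : ∫ v, g v * (v - m) ^ 2 = Q - 2 * m * B + m ^ 2 * A := by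
      have hfun : (fun v => g v * (v - m) ^ 2)
          = fun v => (g v * v ^ 2 - 2 * m * (g v * v)) + m ^ 2 * g v :=
        funext fun v => by ring
      have h1 : Integrable (fun v => g v * v ^ 2 - 2 * m * (g v * v)) :=
        hQint.sub (hBint.const_mul (2 * m))
      have h2 : Integrable (fun v => m ^ 2 * g v) := hgint.const_mul (m ^ 2)
      rw [hfun, integral_add h1 h2, integral_sub hQint (hBint.const_mul (2 * m)),
        integral_const_mul, integral_const_mul]
    have hAident : A * (Q - 2 * m * B + m ^ 2 * A) = A * Q - B ^ 2 := by
      rw [hm]; field_simp; ring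
    calc A ^ 4 / (32 * M ^ 2) = A * ((∫ v, g v) ^ 3 / (32 * M ^ 2)) := by
          rw [← hA]; ring
      _ ≤ A * ∫ v, g v * (v - m) ^ 2 := mul_le_mul_of_nonneg_left hbt hApos.le
      _ = A * (Q - 2 * m * B + m ^ 2 * A) := by rw [hexp]
      _ = A * Q - B ^ 2 := hAident
  -- the 2D lower bound
  set K := Real.sqrt (1 + 2 * R ^ 2) ^ 3 with hK
  have hKpos : 0 < K := by
    have : (0:ℝ) < Real.sqrt (1 + 2 * R ^ 2) := Real.sqrt_pos.2 (by positivity)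
    positivity
  have hDlow : (2 / K) * (A * Q - B ^ 2) ≤ D := by
    set G : ℝ × ℝ → ℝ := fun p => g p.1 * g p.2 * (p.1 - p.2) ^ 2 / K with hGdef
    have hGmeas : Measurable G :=
      (((hgmeas.comp measurable_fst).mul (hgmeas.comp measurable_snd)).mul
        ((measurable_fst.sub measurable_snd).pow_const 2)).div_const K
    have hGint : Integrable G (volume.prod volume) := by
      refine Integrable.mono ((hgint.mul_prod hgint).const_mul (4 * R ^ 2 / K))
        hGmeas.aestronglyMeasurable (ae_of_all _ fun p => ?_)
      obtain ⟨v, w⟩ := p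
      rw [Real.norm_eq_abs, Real.norm_eq_abs]
      by_cases hv : v ∈ J
      · by_cases hw : w ∈ J
        · have h1' := abs_le.1 (hgbd v hv)
          have h2' := abs_le.1 (hgbd w hw)
          have hvw : |v - w| ≤ 2 * R := by
            rw [abs_le]; constructor <;> linarith [h1'.1, h1'.2, h2'.1, h2'.2]
          have hsq : (v - w) ^ 2 ≤ 4 * R ^ 2 := by
            calc (v - w) ^ 2 = |v - w| ^ 2 := (sq_abs _).symm
              _ ≤ (2 * R) ^ 2 := pow_le_pow_left₀ (abs_nonneg _) hvw 2
              _ = 4 * R ^ 2 := by ring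
          have hgg : 0 ≤ g v * g w := mul_nonneg (hg0 v) (hg0 w)
          have hL0 : (0:ℝ) ≤ g v * g w * (v - w) ^ 2 / K :=
            div_nonneg (mul_nonneg hgg (sq_nonneg _)) hKpos.le
          have hR0 : (0:ℝ) ≤ 4 * R ^ 2 / K * (g v * g w) :=
            mul_nonneg (div_nonneg (mul_nonneg (by norm_num) (sq_nonneg R)) hKpos.le) hgg
          rw [abs_of_nonneg hL0, abs_of_nonneg hR0]
          rw [show 4 * R ^ 2 / K * (g v * g w) = 4 * R ^ 2 * (g v * g w) / K by ring,
            div_le_div_iff₀ hKpos hKpos]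
          have h4 : g v * g w * (v - w) ^ 2 ≤ 4 * R ^ 2 * (g v * g w) := by
            calc g v * g w * (v - w) ^ 2 ≤ g v * g w * (4 * R ^ 2) :=
                  mul_le_mul_of_nonneg_left hsq hgg
              _ = 4 * R ^ 2 * (g v * g w) := by ring
          exact mul_le_mul_of_nonneg_right h4 hKpos.le
        · have hz : G (v, w) = 0 := by
            show g v * g w * (v - w) ^ 2 / K = 0
            rw [hgsupp w hw]; ring
          rw [hz, abs_zero]; exact abs_nonneg _
      · have hz : G (v, w) = 0 := by
          show g v * g w * (v - w) ^ 2 / K = 0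
          rw [hgsupp v hv]; ring
        rw [hz, abs_zero]; exact abs_nonneg _
    have hGF : ∀ p, G p ≤ F p := by
      intro p
      obtain ⟨v, w⟩ := p
      by_cases hv : v ∈ J
      · by_cases hw : w ∈ J
        · have hgv : g v = f v := Set.indicator_of_mem hv f
          have hgw : g w = f w := Set.indicator_of_mem hw f
          have hs3 : Real.sqrt (1 + v ^ 2 + w ^ 2) ^ 3 ≤ K := by
            rw [hK]
            refine pow_le_pow_left₀ (Real.sqrt_nonneg _) (Real.sqrt_le_sqrt ?_) 3
            have h1' := abs_le.1 (hgbd v hv)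
            have h2' := abs_le.1 (hgbd w hw)
            have hv2 : v ^ 2 ≤ R ^ 2 := sq_le_sq' h1'.1 h1'.2
            have hw2 : w ^ 2 ≤ R ^ 2 := sq_le_sq' h2'.1 h2'.2
            linarith
          have hspos : (0:ℝ) < Real.sqrt (1 + v ^ 2 + w ^ 2) ^ 3 := by
            have : (0:ℝ) < Real.sqrt (1 + v ^ 2 + w ^ 2) :=
              Real.sqrt_pos.2 (by positivity)
            positivity
          have hdiv : (v - w) ^ 2 / K ≤ (v - w) ^ 2 / Real.sqrt (1 + v ^ 2 + w ^ 2) ^ 3 :=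
            div_le_div_of_nonneg_left (sq_nonneg _) hspos hs3
          have hbr : (v - w) ^ 2 / K ≤ (v - w) * (v / c v - w / c w) :=
            le_trans hdiv (hat_key v w)
          show g v * g w * (v - w) ^ 2 / K ≤ f v * f w * ((v - w) * (v / c v - w / c w))
          rw [hgv, hgw, mul_div_assoc]
          exact mul_le_mul_of_nonneg_left hbr (mul_nonneg (h0 v) (h0 w))
        · have : G (v, w) = 0 := by
            show g v * g w * (v - w) ^ 2 / K = 0
            rw [hgsupp w hw]; ring
          rw [this]; exact hF0 _
      · have : G (v, w) = 0 := by
          show g v * g w * (v - w) ^ 2 / K = 0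
          rw [hgsupp v hv]; ring
        rw [this]; exact hF0 _
    have hGint_eq : ∫ p, G p ∂(volume.prod volume) = (2 / K) * (A * Q - B ^ 2) := by
      have hP1 : Integrable (fun p : ℝ × ℝ => (g p.1 * p.1 ^ 2) * g p.2)
          (volume.prod volume) := hQint.mul_prod hgint
      have hP2 : Integrable (fun p : ℝ × ℝ => g p.1 * (g p.2 * p.2 ^ 2))
          (volume.prod volume) := hgint.mul_prod hQint
      have hP3 : Integrable (fun p : ℝ × ℝ => (g p.1 * p.1) * (g p.2 * p.2))
          (volume.prod volume) := hBint.mul_prod hBint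
      have hGre : G = fun p : ℝ × ℝ =>
          ((g p.1 * p.1 ^ 2) * g p.2 + g p.1 * (g p.2 * p.2 ^ 2)
            - 2 * ((g p.1 * p.1) * (g p.2 * p.2))) / K := by
        funext p; rw [hGdef]; ring
      rw [hGre]
      rw [integral_div]
      have hP12 : Integrable (fun p : ℝ × ℝ =>
          (g p.1 * p.1 ^ 2) * g p.2 + g p.1 * (g p.2 * p.2 ^ 2)) (volume.prod volume) :=
        hP1.add hP2
      have hP3' : Integrable (fun p : ℝ × ℝ =>
          2 * ((g p.1 * p.1) * (g p.2 * p.2))) (volume.prod volume) :=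
        hP3.const_mul 2
      rw [integral_sub hP12 hP3',
        integral_add hP1 hP2, integral_const_mul,
        integral_prod_mul (fun x : ℝ => g x * x ^ 2) g,
        integral_prod_mul g (fun x : ℝ => g x * x ^ 2),
        integral_prod_mul (fun x : ℝ => g x * x) (fun x : ℝ => g x * x)]
      rw [← hA, ← hB, ← hQ]
      field_simp
      ring
    calc (2 / K) * (A * Q - B ^ 2) = ∫ p, G p ∂(volume.prod volume) := hGint_eq.symm
      _ ≤ ∫ p, F p ∂(volume.prod volume) := integral_mono hGint hFint hGF
      _ = D := hD_eq.symm
  have hKbd : K ≤ 64 * E ^ 3 / I ^ 3 := by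
    have h1 : Real.sqrt (1 + 2 * R ^ 2) ≤ 2 * R := by
      have h2 : Real.sqrt (1 + 2 * R ^ 2) ≤ Real.sqrt ((2 * R) ^ 2) :=
        Real.sqrt_le_sqrt (by nlinarith)
      rwa [Real.sqrt_sq (by linarith : (0:ℝ) ≤ 2 * R)] at h2
    calc K ≤ (2 * R) ^ 3 := pow_le_pow_left₀ (Real.sqrt_nonneg _) h1 3
      _ = 64 * E ^ 3 / I ^ 3 := by rw [hR]; field_simp; ring
  -- final assembly
  have hfinal : I ^ 7 / (16384 * M ^ 2 * E ^ 3) ≤ D := by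
    have hKE : I ^ 3 / (64 * E ^ 3) ≤ 1 / K := by
      rw [div_le_div_iff₀ (by positivity) hKpos]
      calc I ^ 3 * K ≤ I ^ 3 * (64 * E ^ 3 / I ^ 3) :=
            mul_le_mul_of_nonneg_left hKbd (by positivity)
        _ = 1 * (64 * E ^ 3) := by field_simp
    have hA4 : I ^ 4 / 16 ≤ A ^ 4 := by
      calc I ^ 4 / 16 = (I / 2) ^ 4 := by ring
        _ ≤ A ^ 4 := pow_le_pow_left₀ (by positivity) hAI 4
    have hc2 : I ^ 4 / 16 / (32 * M ^ 2) ≤ A ^ 4 / (32 * M ^ 2) := by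
      exact (div_le_div_iff_of_pos_right (by positivity)).2 hA4
    have hstep : (2 * (I ^ 3 / (64 * E ^ 3))) * (I ^ 4 / 16 / (32 * M ^ 2))
        ≤ (2 * (1 / K)) * (A ^ 4 / (32 * M ^ 2)) := by
      apply mul_le_mul (by linarith) hc2 (by positivity)
        (mul_nonneg (by norm_num) (one_div_pos.2 hKpos).le)
    calc I ^ 7 / (16384 * M ^ 2 * E ^ 3)
        = (2 * (I ^ 3 / (64 * E ^ 3))) * (I ^ 4 / 16 / (32 * M ^ 2)) := by
          field_simp; ring
      _ ≤ (2 * (1 / K)) * (A ^ 4 / (32 * M ^ 2)) := hstep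
      _ = (2 / K) * (A ^ 4 / (32 * M ^ 2)) := by ring
      _ ≤ (2 / K) * (A * Q - B ^ 2) :=
          mul_le_mul_of_nonneg_left hvar (div_nonneg (by norm_num) hKpos.le)
      _ ≤ D := hDlow
  calc I ^ 7 = I ^ 7 / (16384 * M ^ 2 * E ^ 3) * (16384 * M ^ 2 * E ^ 3) := by
        field_simp
    _ ≤ D * (16384 * M ^ 2 * E ^ 3) := by
        apply mul_le_mul_of_nonneg_right hfinal (by positivity)
    _ = 16384 * M ^ 2 * D * E ^ 3 := by ring
end
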